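/- Let n ≥ 2, let r : ZMod n → [0,∞) satisfy L := 1 − 2∑_i r_i > 0, and let ε > 0 satisfy L < nε. Let P_1, …, P_n be Borel probability measures on ℝ with P_i([−ε, ε]) = 0 for all i, and let κ be the strict-exclusion parallel gap kernel on X_L. Then every Δ ∈ X_L with max_i Δ_i < ε satisfies κ(Δ) = δ_Δ (the Dirac measure at Δ); in particular κ has infinitely many pairwise distinct invariant probability measures. -/

import Mathlib

open MeasureTheory

/-- Displacement of particle `i` under the strict exclusion rule: the particle
moves by `v_i` if the jump keeps admissibility, and stays put otherwise. -/
noncomputable def strictDisp (n : ℕ) (Δ v : ZMod n → ℝ) (i : ZMod n) : ℝ :=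
  if (0 ≤ v i ∧ v i ≤ Δ i) ∨ (-(Δ (i - 1)) ≤ v i ∧ v i < 0) then v i else 0

/-- The strict-exclusion parallel gap update map. -/
noncomputable def strictGapUpdate (n : ℕ) (v Δ : ZMod n → ℝ) : ZMod n → ℝ :=
  fun i => Δ i - strictDisp n Δ v i + strictDisp n Δ v (i + 1)

lemma strict_ae_fixed (n : ℕ) [NeZero n] (ε : ℝ)
    (P : ZMod n → Measure ℝ) [∀ i, IsProbabilityMeasure (P i)]
    (hP : ∀ i, P i (Set.Icc (-ε) ε) = 0) (Δ : ZMod n → ℝ) (hΔ0 : ∀ i, 0 ≤ Δ i)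
    (hΔε : ∀ i, Δ i < ε) (hε : 0 < ε) :
    ∀ᵐ v ∂Measure.pi P, strictGapUpdate n v Δ = Δ := by
  have hN : Measure.pi P (⋃ i, Function.eval i ⁻¹' Set.Icc (-ε) ε) = 0 :=
    measure_iUnion_null fun i => Measure.pi_eval_preimage_null _ (hP i)
  refine measure_mono_null (fun v hv => ?_) hN
  by_contra hvN
  apply hv
  simp only [Set.mem_iUnion, not_exists] at hvN
  have hout : ∀ i, v i < -ε ∨ ε < v i := by
    intro i
    have := hvN i
    simp only [Function.eval, Set.mem_preimage, Set.mem_Icc, not_and_or, not_le] at this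
    tauto
  have hd : ∀ i, strictDisp n Δ v i = 0 := by
    intro i
    rw [strictDisp, if_neg]
    rintro (⟨h1, h2⟩ | ⟨h1, h2⟩)
    · rcases hout i with h | h
      · linarith
      · linarith [hΔε i]
    · rcases hout i with h | h
      · linarith [hΔ0 (i - 1), hΔε (i - 1)]
      · linarith
  funext i
  simp [strictGapUpdate, hd]

lemma strict_fixed_point (n : ℕ) [NeZero n] (ε : ℝ)
    (P : ZMod n → Measure ℝ) [∀ i, IsProbabilityMeasure (P i)]
    (hP : ∀ i, P i (Set.Icc (-ε) ε) = 0) (Δ : ZMod n → ℝ) (hΔ0 : ∀ i, 0 ≤ Δ i)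
    (hΔε : ∀ i, Δ i < ε) (hε : 0 < ε) :
    (Measure.pi P).map (fun v => strictGapUpdate n v Δ) = Measure.dirac Δ := by
  have h := strict_ae_fixed n ε P hP Δ hΔ0 hΔε hε
  have : (Measure.pi P).map (fun v => strictGapUpdate n v Δ)
      = (Measure.pi P).map (fun _ => Δ) := Measure.map_congr h
  rw [this, Measure.map_const]
  simp

/-- **Proposition 10 of the paper.**  If each jump distribution `P_i` gives zero
mass to `[-ε, ε]` and `L < n ε`, then every admissible gap configuration `Δ`
with all gaps `< ε` is a fixed point of the strict-exclusion parallel gap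
kernel (`κ(Δ)` is the Dirac measure at `Δ`); in particular the kernel has
infinitely many pairwise distinct invariant probability measures. -/
theorem strict_exclusion_kernel_nonergodic
    (n : ℕ) [NeZero n] (hn : 2 ≤ n)
    (r : ZMod n → ℝ) (hr : ∀ i, 0 ≤ r i)
    (L : ℝ) (hLdef : L = 1 - 2 * ∑ i : ZMod n, r i) (hL : 0 < L)
    (ε : ℝ) (hε : 0 < ε) (hLε : L < n * ε)
    (P : ZMod n → Measure ℝ) [∀ i, IsProbabilityMeasure (P i)]
    (hP : ∀ i, P i (Set.Icc (-ε) ε) = 0) :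
    (∀ Δ : ZMod n → ℝ, (∀ i, 0 ≤ Δ i) → (∑ i : ZMod n, Δ i = L) →
      (∀ i, Δ i < ε) →
      (Measure.pi P).map (fun v => strictGapUpdate n v Δ) = Measure.dirac Δ) ∧
    {μ : Measure (ZMod n → ℝ) |
      IsProbabilityMeasure μ ∧
      μ {Δ | (∀ i, 0 ≤ Δ i) ∧ ∑ i : ZMod n, Δ i = L} = 1 ∧
      ∀ A : Set (ZMod n → ℝ), MeasurableSet A →
        ∫⁻ Δ, Measure.pi P ((fun v => strictGapUpdate n v Δ) ⁻¹' A) ∂μ = μ A}.Infinite := by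
  have hnpos : (0 : ℝ) < n := by exact_mod_cast Nat.pos_of_ne_zero (NeZero.ne n)
  have h01 : (0 : ZMod n) ≠ 1 := by
    have : Nontrivial (ZMod n) := ZMod.nontrivial_iff.mpr (by omega)
    exact zero_ne_one
  have hLn : L / n < ε := (div_lt_iff₀ hnpos).mpr (by linarith [hLε])
  have hLnpos : 0 < L / n := div_pos hL hnpos
  constructor
  · exact fun Δ h0 _ hlt => strict_fixed_point n ε P hP Δ h0 hlt hε
  · -- infinitely many invariant measures
    set c : ℝ := min (ε - L / n) (L / n) with hc
    have hcpos : 0 < c := lt_min (by linarith) hLnpos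
    -- family of configurations
    set Δf : ℕ → ZMod n → ℝ := fun k i =>
      L / n + (if i = 0 then c / (k + 2) else 0) - (if i = 1 then c / (k + 2) else 0)
      with hΔf
    have htk : ∀ k : ℕ, 0 < c / (k + 2) ∧ c / (k + 2) < c := by
      intro k
      have h2 : (0 : ℝ) < (k : ℝ) + 2 := by positivity
      constructor
      · positivity
      · rw [div_lt_iff₀ h2]
        nlinarith [hcpos]
    have h0k : ∀ k i, 0 ≤ Δf k i := by
      intro k i
      obtain ⟨h1, h2⟩ := htk k
      have hc1 : c ≤ L / n := min_le_right _ _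
      simp only [hΔf]
      split_ifs with hi hj hj
      · exact absurd (hi.symm.trans hj) h01
      · linarith
      · linarith
      · linarith
    have hεk : ∀ k i, Δf k i < ε := by
      intro k i
      obtain ⟨h1, h2⟩ := htk k
      have hc2 : c ≤ ε - L / n := min_le_left _ _
      simp only [hΔf]
      split_ifs with hi hj hj
      · exact absurd (hi.symm.trans hj) h01
      · linarith
      · linarith
      · linarith
    have hsum : ∀ k, ∑ i : ZMod n, Δf k i = L := by
      intro k
      simp only [hΔf]
      rw [Finset.sum_sub_distrib, Finset.sum_add_distrib]
      rw [Finset.sum_const, Finset.sum_ite_eq' Finset.univ (0 : ZMod n) (fun _ => c / (k + 2)),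
        Finset.sum_ite_eq' Finset.univ (1 : ZMod n) (fun _ => c / (k + 2))]
      simp only [Finset.mem_univ, if_true, Finset.card_univ, ZMod.card, nsmul_eq_mul]
      field_simp
      ring
    have hinj : Function.Injective Δf := by
      intro a b hab
      have h := congrFun hab 0
      simp only [hΔf, if_pos rfl, if_neg h01, if_true, sub_zero] at h
      have h2a : (0 : ℝ) < (a : ℝ) + 2 := by positivity
      have h2b : (0 : ℝ) < (b : ℝ) + 2 := by positivity
      have hdiv : c / ((a : ℝ) + 2) = c / ((b : ℝ) + 2) := by linarith
      rw [div_eq_div_iff h2a.ne' h2b.ne'] at hdiv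
      have : ((a : ℝ)) = ((b : ℝ)) := by
        nlinarith [hcpos]
      exact_mod_cast this
    refine Set.infinite_of_injective_forall_mem
      (f := fun k : ℕ => Measure.dirac (Δf k)) ?_ ?_
    · intro a b hab
      apply hinj
      have hab' : Measure.dirac (Δf a) = Measure.dirac (Δf b) := hab
      have h1 : Measure.dirac (Δf a) {Δf a} = Measure.dirac (Δf b) {Δf a} := by rw [hab']
      rw [Measure.dirac_apply_of_mem (Set.mem_singleton _)] at h1
      by_contra hne
      rw [Measure.dirac_apply' _ (measurableSet_singleton _)] at h1
      simp [Set.indicator, Ne.symm hne] at h1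
    · intro k
      refine ⟨inferInstance, ?_, ?_⟩
      · exact Measure.dirac_apply_of_mem ⟨h0k k, hsum k⟩
      · intro A hA
        rw [lintegral_dirac]
        · have hmap := strict_fixed_point n ε P hP (Δf k) (h0k k) (hεk k) hε
          have hcongr : (fun v => strictGapUpdate n v (Δf k)) ⁻¹' A
              =ᵐ[Measure.pi P] (fun _ : ZMod n → ℝ => Δf k) ⁻¹' A := by
            filter_upwards [strict_ae_fixed n ε P hP (Δf k) (h0k k) (hεk k) hε] with v hv
            show (strictGapUpdate n v (Δf k) ∈ A) = (Δf k ∈ A)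
            rw [hv]
          rw [measure_congr hcongr]
          by_cases hmem : Δf k ∈ A
          · rw [Measure.dirac_apply_of_mem hmem]
            have : (fun _ : ZMod n → ℝ => Δf k) ⁻¹' A = Set.univ := by
              ext v; simp [hmem]
            rw [this]; simp
          · rw [Measure.dirac_apply' _ hA]
            have : (fun _ : ZMod n → ℝ => Δf k) ⁻¹' A = ∅ := by
              ext v; simp [hmem]
            rw [this]
            simp [Set.indicator, hmem]
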